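/- Given a directed graph G and optimal sets S, T with ρ*(G) = ρ_G(S,T), if t satisfies sqrt(|S|/|T|)·(1−ε) ≤ t ≤ sqrt(|S|/|T|)·(1+ε) for 0 < ε < 1, then ρ*(G_t) ≥ (1−ε)·ρ*(G). -/

import Mathlib

open Finset

/-- The set of edges of the directed graph `E` going from `S` to `T`. -/
def eST {V : Type*} [DecidableEq V] (E : Finset (V × V)) (S T : Finset V) :
    Finset (V × V) :=
  E.filter fun p => p.1 ∈ S ∧ p.2 ∈ T

/-- Directed density `ρ_G(S,T) = |E(S,T)| / sqrt(|S||T|)`. -/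
noncomputable def dDen {V : Type*} [DecidableEq V] (E : Finset (V × V)) (S T : Finset V) : ℝ :=
  ((eST E S T).card : ℝ) / Real.sqrt ((S.card : ℝ) * (T.card : ℝ))

/-- Density of `S^L ∪ T^R` in the reduction graph `G_t`:
`|E(S,T)| / ((|S|/t + t|T|)/2)`. -/
noncomputable def wDen {V : Type*} [DecidableEq V] (E : Finset (V × V)) (t : ℝ)
    (S T : Finset V) : ℝ :=
  ((eST E S T).card : ℝ) / (((S.card : ℝ) / t + t * (T.card : ℝ)) / 2)

/-- Optimum directed density `ρ*(G)`, over nonempty `S, T`. -/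
noncomputable def rhoStar {V : Type*} [DecidableEq V] (E : Finset (V × V)) : ℝ :=
  sSup {x : ℝ | ∃ S T : Finset V, S.Nonempty ∧ T.Nonempty ∧ x = dDen E S T}

/-- Optimum density `ρ*(G_t)` of the vertex-weighted reduction graph, over nonempty `S, T`. -/
noncomputable def rhoStarT {V : Type*} [DecidableEq V] (E : Finset (V × V)) (t : ℝ) : ℝ :=
  sSup {x : ℝ | ∃ S T : Finset V, S.Nonempty ∧ T.Nonempty ∧ x = wDen E t S T}

/-- If `(S,T)` achieves the optimum directed density and
`sqrt(|S|/|T|)·(1−ε) ≤ t ≤ sqrt(|S|/|T|)·(1+ε)` with `0 < ε < 1`, then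
`ρ*(G_t) ≥ (1−ε)·ρ*(G)`. -/
theorem stmt3 {V : Type*} [Fintype V] [DecidableEq V]
    (E : Finset (V × V)) (S T : Finset V) (hS : S.Nonempty) (hT : T.Nonempty)
    (hopt : ∀ S' T' : Finset V, S'.Nonempty → T'.Nonempty → dDen E S' T' ≤ dDen E S T)
    (ε t : ℝ) (hε0 : 0 < ε) (hε1 : ε < 1)
    (ht1 : Real.sqrt ((S.card : ℝ) / (T.card : ℝ)) * (1 - ε) ≤ t)
    (ht2 : t ≤ Real.sqrt ((S.card : ℝ) / (T.card : ℝ)) * (1 + ε)) :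
    (1 - ε) * rhoStar E ≤ rhoStarT E t := by
  have hε' : 0 < 1 - ε := by linarith
  set s : ℝ := (S.card : ℝ) with hs
  set u : ℝ := (T.card : ℝ) with hu
  have hs0 : 0 < s := by rw [hs]; exact_mod_cast Finset.card_pos.mpr hS
  have hu0 : 0 < u := by rw [hu]; exact_mod_cast Finset.card_pos.mpr hT
  set r : ℝ := Real.sqrt (s / u) with hrdef
  have hr0 : 0 < r := Real.sqrt_pos.mpr (div_pos hs0 hu0)
  have ht0 : 0 < t := lt_of_lt_of_le (by positivity) ht1
  set q : ℝ := Real.sqrt (s * u) with hqdef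
  have hq0 : 0 < q := Real.sqrt_pos.mpr (mul_pos hs0 hu0)
  have hr2 : r ^ 2 = s / u := Real.sq_sqrt (le_of_lt (div_pos hs0 hu0))
  have hq2 : q ^ 2 = s * u := Real.sq_sqrt (le_of_lt (mul_pos hs0 hu0))
  have hru : r * u = q := by
    rw [hrdef, hqdef, ← Real.sqrt_mul_self hu0.le, ← Real.sqrt_mul (by positivity)]
    congr 1
    field_simp
    rw [Real.sq_sqrt (sq_nonneg u)]
  have hsr : s / r = q := by
    rw [div_eq_iff hr0.ne', ← hru]
    have h : r * u * r = r ^ 2 * u := by ring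
    rw [h, hr2]
    field_simp
  -- rhoStar E = dDen E S T
  have hbdd : BddAbove {x : ℝ | ∃ S' T' : Finset V, S'.Nonempty ∧ T'.Nonempty ∧ x = dDen E S' T'} := by
    refine ⟨dDen E S T, ?_⟩
    rintro x ⟨S', T', hS', hT', rfl⟩
    exact hopt S' T' hS' hT'
  have hmem : dDen E S T ∈ {x : ℝ | ∃ S' T' : Finset V, S'.Nonempty ∧ T'.Nonempty ∧ x = dDen E S' T'} :=
    ⟨S, T, hS, hT, rfl⟩
  have hrho : rhoStar E = dDen E S T := by
    refine le_antisymm (csSup_le ⟨_, hmem⟩ ?_) (le_csSup hbdd hmem)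
    rintro x ⟨S', T', hS', hT', rfl⟩
    exact hopt S' T' hS' hT'
  -- rhoStarT bounded above
  have hbddT : BddAbove {x : ℝ | ∃ S' T' : Finset V, S'.Nonempty ∧ T'.Nonempty ∧ x = wDen E t S' T'} := by
    refine ⟨(E.card : ℝ), ?_⟩
    rintro x ⟨S', T', hS', hT', rfl⟩
    have hs' : (1 : ℝ) ≤ (S'.card : ℝ) := by exact_mod_cast Finset.card_pos.mpr hS'
    have hu' : (1 : ℝ) ≤ (T'.card : ℝ) := by exact_mod_cast Finset.card_pos.mpr hT'
    have hD : (1 : ℝ) ≤ ((S'.card : ℝ) / t + t * (T'.card : ℝ)) / 2 := by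
      have h1 : 1 / t + t * 1 ≤ (S'.card : ℝ) / t + t * (T'.card : ℝ) := by
        gcongr
      have h2 : (2 : ℝ) ≤ 1 / t + t := by
        rw [div_add' _ _ _ (ne_of_gt ht0), le_div_iff₀ ht0]
        nlinarith [sq_nonneg (t - 1)]
      nlinarith
    calc wDen E t S' T' ≤ ((eST E S' T').card : ℝ) :=
          div_le_self (by positivity) hD
      _ ≤ (E.card : ℝ) := by exact_mod_cast Finset.card_filter_le E _
  -- key inequality: (1-ε) * dDen E S T ≤ wDen E t S T
  set m : ℝ := ((eST E S T).card : ℝ) with hm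
  have hm0 : 0 ≤ m := Nat.cast_nonneg _
  set D : ℝ := (s / t + t * u) / 2 with hD
  have hD0 : 0 < D := by
    have : 0 < s / t := div_pos hs0 ht0
    have : 0 < t * u := mul_pos ht0 hu0
    rw [hD]; positivity
  have hDq : D ≤ q / (1 - ε) := by
    have h1 : s / t ≤ q / (1 - ε) := by
      have hcal : s / t ≤ s / (r * (1 - ε)) := by
        gcongr
      calc s / t ≤ s / (r * (1 - ε)) := hcal
        _ = (s / r) / (1 - ε) := by rw [div_div]
        _ = q / (1 - ε) := by rw [hsr]
    have h2 : t * u ≤ q * (1 + ε) := by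
      calc t * u ≤ r * (1 + ε) * u := by
            apply mul_le_mul_of_nonneg_right ht2 (le_of_lt hu0)
        _ = (r * u) * (1 + ε) := by ring
        _ = q * (1 + ε) := by rw [hru]
    have h3 : q / (1 - ε) + q * (1 + ε) ≤ 2 * (q / (1 - ε)) := by
      have h4 : q * (1 + ε) ≤ q / (1 - ε) := by
        rw [le_div_iff₀ hε']
        nlinarith [mul_nonneg (le_of_lt hq0) (sq_nonneg ε)]
      linarith
    rw [hD]; linarith
  have hkey : (1 - ε) * dDen E S T ≤ wDen E t S T := by
    have : (1 - ε) * dDen E S T = m / (q / (1 - ε)) := by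
      rw [dDen, ← hs, ← hu, ← hqdef, ← hm, div_div_eq_mul_div]
      ring
    rw [this, wDen, ← hs, ← hu, ← hm, ← hD]
    gcongr
  have hmemT : wDen E t S T ∈ {x : ℝ | ∃ S' T' : Finset V, S'.Nonempty ∧ T'.Nonempty ∧ x = wDen E t S' T'} :=
    ⟨S, T, hS, hT, rfl⟩
  calc (1 - ε) * rhoStar E = (1 - ε) * dDen E S T := by rw [hrho]
    _ ≤ wDen E t S T := hkey
    _ ≤ rhoStarT E t := le_csSup hbddT hmemT
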